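/- For all μ > 0, min(cos(π/8) + 2 sin(π/8)/(πμ), 1) − √((1+√(1+μ²))/(2√(1+μ²))) ≤ 0.217/μ · μ = 0.217, i.e. the function μ ↦ min(cos(π/8) + 2sin(π/8)/(πμ), 1) − √((1+√(1+μ²))/(2√(1+μ²))) is bounded above by cos(π/8) − 1/√2 < 0.217. -/

import Mathlib

open Real

private lemma myG_sqrt2_lt : Real.sqrt 2 < 1.41422 := by
  rw [Real.sqrt_lt' (by norm_num)]; norm_num

private lemma myG_sqrt2_gt : (1.41421 : ℝ) < Real.sqrt 2 := by
  rw [Real.lt_sqrt (by norm_num)]; norm_num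

private lemma myG_cos_lt : Real.cos (Real.pi / 8) < 0.923885 := by
  rw [Real.cos_pi_div_eight]
  have h := myG_sqrt2_lt
  have : Real.sqrt (2 + Real.sqrt 2) < 1.84777 := by
    rw [Real.sqrt_lt' (by norm_num)]; nlinarith
  linarith

private lemma myG_cos_gt : (0.92385 : ℝ) < Real.cos (Real.pi / 8) := by
  rw [Real.cos_pi_div_eight]
  have h := myG_sqrt2_gt
  have : (1.8477 : ℝ) < Real.sqrt (2 + Real.sqrt 2) := by
    rw [Real.lt_sqrt (by positivity)]; nlinarith
  linarith

private lemma myG_sin_lt : Real.sin (Real.pi / 8) < 0.38269 := by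
  rw [Real.sin_pi_div_eight]
  have h := myG_sqrt2_gt
  have : Real.sqrt (2 - Real.sqrt 2) < 0.76538 := by
    rw [Real.sqrt_lt' (by norm_num)]; nlinarith
  linarith

private lemma myG_sin_pos8 : 0 < Real.sin (Real.pi / 8) := by
  apply Real.sin_pos_of_pos_of_lt_pi
  · positivity
  · nlinarith [Real.pi_pos]

private lemma myG_inv_sqrt2 : 1 / Real.sqrt 2 = Real.sqrt 2 / 2 := by
  have h : Real.sqrt 2 * Real.sqrt 2 = 2 := Real.mul_self_sqrt (by norm_num)
  have hpos : (0:ℝ) < Real.sqrt 2 := Real.sqrt_pos.mpr (by norm_num)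
  field_simp
  linear_combination -h

/-- For `s ≥ 1`, `√((1+s)/(2s)) ≥ √2/2 + 1/((2+√2)s)`. -/
private lemma myG_key_sqrt_bound {s : ℝ} (hs : 1 ≤ s) :
    Real.sqrt 2 / 2 + 1 / ((2 + Real.sqrt 2) * s) ≤ Real.sqrt ((1 + s) / (2 * s)) := by
  have hspos : (0:ℝ) < s := by linarith
  have hr : Real.sqrt 2 * Real.sqrt 2 = 2 := Real.mul_self_sqrt (by norm_num)
  have hrpos : (0:ℝ) < Real.sqrt 2 := Real.sqrt_pos.mpr (by norm_num)
  have hd : (0:ℝ) < (2 + Real.sqrt 2) * s := by positivity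
  set r := Real.sqrt 2 with hrdef
  set k := 1 / ((2 + r) * s) with hkdef
  have hk0 : 0 < k := by rw [hkdef]; positivity
  have hk : k * ((2 + r) * s) = 1 := by
    rw [hkdef]; field_simp
  have hk1 : k * (2 + r) ≤ 1 := by nlinarith
  have hk2 : 2 * k ≤ 2 - r := by nlinarith
  rw [Real.le_sqrt (by positivity) (by positivity), le_div_iff₀ (by positivity)]
  have hfin : 0 ≤ k * s * (2 - r - 2 * k) := by
    apply mul_nonneg (by positivity); linarith
  nlinarith [hk, hr, hfin]

theorem G_integral_key_bound :
    (∀ μ : ℝ, 0 < μ →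
      min (Real.cos (Real.pi / 8) + 2 * Real.sin (Real.pi / 8) / (Real.pi * μ)) 1 -
          Real.sqrt ((1 + Real.sqrt (1 + μ ^ 2)) / (2 * Real.sqrt (1 + μ ^ 2)))
        ≤ Real.cos (Real.pi / 8) - 1 / Real.sqrt 2) ∧
    Real.cos (Real.pi / 8) - 1 / Real.sqrt 2 < 0.217 := by
  have h2lt := myG_sqrt2_lt
  have h2gt := myG_sqrt2_gt
  have hinv : 1 / Real.sqrt 2 = Real.sqrt 2 / 2 := myG_inv_sqrt2
  constructor
  · intro μ hμ
    set s := Real.sqrt (1 + μ ^ 2) with hs_def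
    have hs1 : 1 ≤ s := by
      rw [hs_def]
      rw [Real.le_sqrt (by norm_num) (by positivity)]
      nlinarith
    have hspos : (0:ℝ) < s := by linarith
    have hssq : s ^ 2 = 1 + μ ^ 2 := Real.sq_sqrt (by positivity)
    by_cases hcase : μ ≤ 4
    · -- use min ≤ 1; need √((1+s)/(2s)) ≥ 1 - cos(π/8) + 1/√2
      have hsle : s ≤ 4.1232 := by
        rw [hs_def]
        rw [show (4.1232:ℝ) = Real.sqrt (4.1232 ^ 2) from (Real.sqrt_sq (by norm_num)).symm]
        apply Real.sqrt_le_sqrt; nlinarith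
      have hbig : 1 - Real.cos (Real.pi / 8) + 1 / Real.sqrt 2 ≤
          Real.sqrt ((1 + s) / (2 * s)) := by
        have hcg := myG_cos_gt
        rw [Real.le_sqrt (by rw [hinv]; nlinarith [Real.cos_le_one (Real.pi/8)]) (by positivity)]
        have hle : 1 - Real.cos (Real.pi / 8) + 1 / Real.sqrt 2 ≤ 0.78326 := by
          rw [hinv]; nlinarith
        have hge : (0:ℝ) ≤ 1 - Real.cos (Real.pi / 8) + 1 / Real.sqrt 2 := by
          rw [hinv]; nlinarith [Real.cos_le_one (Real.pi/8)]
        have hsq : (1 - Real.cos (Real.pi / 8) + 1 / Real.sqrt 2) ^ 2 ≤ 0.78326 ^ 2 := by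
          nlinarith
        have hfrac : (0.78326:ℝ) ^ 2 ≤ (1 + s) / (2 * s) := by
          rw [le_div_iff₀ (by positivity)]; nlinarith
        linarith
      calc min (Real.cos (Real.pi / 8) + 2 * Real.sin (Real.pi / 8) / (Real.pi * μ)) 1 -
            Real.sqrt ((1 + s) / (2 * s))
          ≤ 1 - Real.sqrt ((1 + s) / (2 * s)) := by
            have := min_le_right (Real.cos (Real.pi / 8) + 2 * Real.sin (Real.pi / 8) / (Real.pi * μ)) 1
            linarith
        _ ≤ Real.cos (Real.pi / 8) - 1 / Real.sqrt 2 := by linarith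
    · -- μ > 4 : use min ≤ first and myG_key_sqrt_bound
      push_neg at hcase
      have hsle : s ≤ 1.0308 * μ := by
        rw [hs_def]
        rw [show (1.0308:ℝ) * μ = Real.sqrt ((1.0308 * μ) ^ 2) from
          (Real.sqrt_sq (by positivity)).symm]
        apply Real.sqrt_le_sqrt; nlinarith
      have hkey := myG_key_sqrt_bound hs1
      have hpig : (3.141592:ℝ) < Real.pi := Real.pi_gt_d6
      have hslt := myG_sin_lt
      have hsp := myG_sin_pos8
      -- 2 sin / (π μ) ≤ 1/((2+√2) s)
      have hfrac : 2 * Real.sin (Real.pi / 8) / (Real.pi * μ) ≤ 1 / ((2 + Real.sqrt 2) * s) := by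
        rw [div_le_div_iff₀ (by positivity) (by positivity)]
        have h1 : 2 * Real.sin (Real.pi / 8) * ((2 + Real.sqrt 2) * s) ≤
            2 * 0.38269 * ((2 + 1.41422) * (1.0308 * μ)) := by
          have hs0 : 0 < (2 + Real.sqrt 2) * s := by positivity
          have : (2 + Real.sqrt 2) * s ≤ (2 + 1.41422) * (1.0308 * μ) := by
            apply mul_le_mul (by linarith) hsle (le_of_lt hspos) (by linarith)
          nlinarith
        nlinarith
      have hbig : 1 / Real.sqrt 2 + 2 * Real.sin (Real.pi / 8) / (Real.pi * μ) ≤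
          Real.sqrt ((1 + s) / (2 * s)) := by
        rw [hinv]; linarith
      calc min (Real.cos (Real.pi / 8) + 2 * Real.sin (Real.pi / 8) / (Real.pi * μ)) 1 -
            Real.sqrt ((1 + s) / (2 * s))
          ≤ Real.cos (Real.pi / 8) + 2 * Real.sin (Real.pi / 8) / (Real.pi * μ) -
            Real.sqrt ((1 + s) / (2 * s)) := by
            have := min_le_left (Real.cos (Real.pi / 8) + 2 * Real.sin (Real.pi / 8) / (Real.pi * μ)) 1
            linarith
        _ ≤ Real.cos (Real.pi / 8) - 1 / Real.sqrt 2 := by linarith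
  · have := myG_cos_lt
    rw [hinv]
    nlinarith
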